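/- Let Z be an N×N Hermitian complex matrix with spectral decomposition Z = U·diag(λ_1,...,λ_N)·U*, where U is unitary. Define X₀ = U·diag(t_1,...,t_N)·U*, where t_i = λ_i if λ_i ≥ 0 and t_i = 0 if λ_i < 0. Then X₀ is positive semidefinite, and for every positive semidefinite Y ∈ M_N(ℂ), ‖Z − X₀‖_F ≤ ‖Z − Y‖_F. -/

import Mathlib

open Matrix Finset
open scoped ComplexOrder

/-- Frobenius norm of a square complex matrix. -/
noncomputable def frobNorm {n : Type*} [Fintype n] (X : Matrix n n ℂ) : ℝ :=
  Real.sqrt ((Xᴴ * X).trace.re)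

lemma frob_conj {n : Type*} [Fintype n] [DecidableEq n] (U A : Matrix n n ℂ)
    (hU : U ∈ Matrix.unitaryGroup n ℂ) :
    frobNorm (U * A * Uᴴ) = frobNorm A := by
  unfold frobNorm
  congr 2
  have h1 : Uᴴ * U = 1 := (Matrix.mem_unitaryGroup_iff'.mp hU)
  have e : (U * A * Uᴴ)ᴴ * (U * A * Uᴴ) = U * (Aᴴ * A) * Uᴴ := by
    simp only [conjTranspose_mul, conjTranspose_conjTranspose, Matrix.mul_assoc]
    rw [← Matrix.mul_assoc Uᴴ U, h1, Matrix.one_mul]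
  rw [e, Matrix.trace_mul_cycle, ← Matrix.mul_assoc, h1, Matrix.one_mul]

lemma trace_re_eq {n : Type*} [Fintype n] (X : Matrix n n ℂ) :
    (Xᴴ * X).trace.re = ∑ i, ∑ j, Complex.normSq (X j i) := by
  simp only [Matrix.trace, Matrix.mul_apply, Matrix.conjTranspose_apply,
    Complex.re_sum, Matrix.diag_apply]
  congr 1; ext i; congr 1; ext j
  rw [RCLike.star_def, Complex.normSq_apply, Complex.mul_re]
  simp [Complex.conj_re, Complex.conj_im]

lemma psd_diag_nonneg {n : Type*} [Fintype n] [DecidableEq n] {W : Matrix n n ℂ}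
    (hW : W.PosSemidef) (i : n) : 0 ≤ W i i := by
  exact hW.diag_nonneg

/-- Projection onto the positive semidefinite cone: truncating the negative eigenvalues of a
Hermitian matrix `Z` yields the Frobenius-nearest positive semidefinite matrix. -/
theorem stmt11 {N : ℕ} (Z : Matrix (Fin N) (Fin N) ℂ) (hZ : Z.IsHermitian)
    (U : Matrix (Fin N) (Fin N) ℂ) (hU : U ∈ Matrix.unitaryGroup (Fin N) ℂ)
    (lam : Fin N → ℝ)
    (hZU : Z = U * Matrix.diagonal (fun i => (lam i : ℂ)) * Uᴴ)
    (X₀ : Matrix (Fin N) (Fin N) ℂ)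
    (hX₀ : X₀ = U * Matrix.diagonal (fun i => ((if 0 ≤ lam i then lam i else 0 : ℝ) : ℂ)) * Uᴴ) :
    X₀.PosSemidef ∧
      ∀ Y : Matrix (Fin N) (Fin N) ℂ, Y.PosSemidef →
        frobNorm (Z - X₀) ≤ frobNorm (Z - Y) := by
  set t : Fin N → ℝ := fun i => if 0 ≤ lam i then lam i else 0 with ht
  have h1 : Uᴴ * U = 1 := Matrix.mem_unitaryGroup_iff'.mp hU
  have h2 : U * Uᴴ = 1 := Matrix.mem_unitaryGroup_iff.mp hU
  constructor
  · rw [hX₀]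
    exact (Matrix.posSemidef_diagonal_iff.mpr fun i =>
      Complex.zero_le_real.mpr (by by_cases h : 0 ≤ lam i <;> simp [h])).mul_mul_conjTranspose_same U
  · intro Y hY
    set W : Matrix (Fin N) (Fin N) ℂ := Uᴴ * Y * U with hW
    have hWpsd : W.PosSemidef := hY.conjTranspose_mul_mul_same U
    have hYW : Y = U * W * Uᴴ := by
      rw [hW]
      calc Y = (U * Uᴴ) * Y * (U * Uᴴ) := by rw [h2]; simp
        _ = U * (Uᴴ * Y * U) * Uᴴ := by noncomm_ring
    have e1 : Z - X₀ = U * (Matrix.diagonal (fun i => (lam i : ℂ))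
        - Matrix.diagonal (fun i => (t i : ℂ))) * Uᴴ := by
      rw [hZU, hX₀]; noncomm_ring
    have e2 : Z - Y = U * (Matrix.diagonal (fun i => (lam i : ℂ)) - W) * Uᴴ := by
      rw [hZU, hYW]; noncomm_ring
    rw [e1, e2, frob_conj _ _ hU, frob_conj _ _ hU]
    unfold frobNorm
    apply Real.sqrt_le_sqrt
    rw [trace_re_eq, trace_re_eq]
    set D := Matrix.diagonal (fun i => (lam i : ℂ))
    calc ∑ i, ∑ j, Complex.normSq ((D - Matrix.diagonal (fun i => (t i : ℂ))) j i)
        = ∑ i, (lam i - t i) ^ 2 := by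
          refine Finset.sum_congr rfl fun i _ => ?_
          rw [Finset.sum_eq_single i]
          · simp [D, Matrix.diagonal_apply_eq, Complex.normSq_apply, sq]
          · intro j _ hji
            simp [D, Matrix.diagonal_apply_ne _ hji]
          · simp
      _ ≤ ∑ i, Complex.normSq ((D - W) i i) := by
          refine Finset.sum_le_sum fun i _ => ?_
          have hii := psd_diag_nonneg hWpsd i
          have him : (W i i).im = 0 := by
            rw [Complex.le_def] at hii; simpa using hii.2.symm
          have hre : 0 ≤ (W i i).re := by
            rw [Complex.le_def] at hii; simpa using hii.1
          have : ((D - W) i i) = Complex.mk (lam i - (W i i).re) (-(W i i).im) := by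
            simp [D, Matrix.sub_apply, Matrix.diagonal_apply_eq, Complex.ext_iff]
          rw [this, Complex.normSq_mk, him]
          by_cases h : 0 ≤ lam i
          · simp only [ht, if_pos h]
            nlinarith
          · simp only [ht, if_neg h]
            push_neg at h
            nlinarith
      _ ≤ ∑ i, ∑ j, Complex.normSq ((D - W) j i) := by
          refine Finset.sum_le_sum fun i _ => ?_
          exact Finset.single_le_sum (f := fun j => Complex.normSq ((D - W) j i)) (fun j _ => Complex.normSq_nonneg _) (Finset.mem_univ i)
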